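/- Let ε > 0, H > 0, θ ∈ ℝ, and define maps on ℂ by 𝓕u = e^{(1+i/ε)H}·u and 𝓒u = e^{H}·e^{i(H/ε+θ)}·u. Define the parareal iterates with u₀ = 1 by u⁰ₙ = 𝓒ⁿ(1), uᵏ₀ = 1, and uᵏₙ = 𝓒(uᵏₙ₋₁) + 𝓕(uᵏ⁻¹ₙ₋₁) − 𝓒(uᵏ⁻¹ₙ₋₁). Then the second-iteration value at n = 3 satisfies the exact identity u²₃ = e^{3(1+i/ε)H}·(1 − (1 − e^{iθ})³), and consequently |u²₃ − u(3H)| ≤ |θ|³·e^{3H}, where u(3H) = e^{3(1+i/ε)H} is the exact solution of u̇ = (1 + i/ε)u, u(0) = 1, at time 3H. Thus each naive parareal iteration improves the phase error by one power of θ, so the iterations converge only when the coarse phase error θ is small. -/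

import Mathlib

open Complex

/-- For the expanding spiral `u̇ = (1 + i/ε) u`, `u(0) = 1`, with exact fine propagator
`𝓕 u = e^{(1+i/ε)H} u` and a coarse propagator `𝓒 u = e^H e^{i(H/ε+θ)} u` that is exact
in the amplitude but makes a phase error `θ` per step, the second parareal iterate at
`n = 3` satisfies `u²₃ = e^{3(1+i/ε)H} (1 - (1 - e^{iθ})³)`, hence
`|u²₃ - u(3H)| ≤ |θ|³ e^{3H}`. -/
lemma cos_ineq (θ : ℝ) : 2 - 2*Real.cos θ ≤ θ^2 := by
  have h1 : Real.cos θ = 1 - 2 * Real.sin (θ/2)^2 := by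
    have := Real.cos_two_mul (θ/2)
    have h2 : 2 * (θ/2) = θ := by ring
    rw [h2] at this
    have h3 := Real.sin_sq_add_cos_sq (θ/2)
    nlinarith
  have h2 : |Real.sin (θ/2)| ≤ |θ/2| := Real.abs_sin_le_abs
  have h3 : Real.sin (θ/2)^2 ≤ (θ/2)^2 := by
    nlinarith [abs_nonneg (Real.sin (θ/2)), _root_.sq_abs (Real.sin (θ/2)), _root_.sq_abs (θ/2)]
  nlinarith

lemma abs_exp_I_sub_one_le (θ : ℝ) : ‖Complex.exp (Complex.I * θ) - 1‖ ≤ |θ| := by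
  have hexp : Complex.exp (Complex.I * θ) = (Real.cos θ : ℂ) + (Real.sin θ : ℂ) * I := by
    rw [mul_comm, Complex.exp_mul_I, Complex.ofReal_cos, Complex.ofReal_sin]
  have hsq : (‖Complex.exp (Complex.I * θ) - 1‖)^2 = 2 - 2*Real.cos θ := by
    rw [Complex.sq_norm, hexp]
    have : (Real.cos θ : ℂ) + (Real.sin θ : ℂ) * I - 1 = ((Real.cos θ - 1 : ℝ) : ℂ) + (Real.sin θ : ℂ) * I := by
      push_cast; ring
    rw [this, Complex.normSq_add_mul_I]
    have := Real.sin_sq_add_cos_sq θ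
    nlinarith
  have h2 : (‖Complex.exp (Complex.I * θ) - 1‖)^2 ≤ |θ|^2 := by
    rw [hsq, _root_.sq_abs]; exact cos_ineq θ
  exact (pow_le_pow_iff_left₀ (norm_nonneg _) (abs_nonneg θ) two_ne_zero).mp h2

theorem parareal_spiral_second_iteration
    (ε H θ : ℝ) (hε : 0 < ε) (hH : 0 < H)
    (𝓕 𝓒 : ℂ → ℂ)
    (h𝓕 : ∀ z : ℂ, 𝓕 z = Complex.exp ((1 + Complex.I / (ε : ℂ)) * (H : ℂ)) * z)
    (h𝓒 : ∀ z : ℂ, 𝓒 z = (Real.exp H : ℂ)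
      * Complex.exp (Complex.I * ((H : ℂ) / (ε : ℂ) + (θ : ℂ))) * z)
    (u : ℕ → ℕ → ℂ)
    (hinit : ∀ n : ℕ, u 0 n = 𝓒^[n] 1)
    (hzero : ∀ k : ℕ, u k 0 = 1)
    (hrec : ∀ k n : ℕ, u (k + 1) (n + 1)
      = 𝓒 (u (k + 1) n) + 𝓕 (u k n) - 𝓒 (u k n)) :
    u 2 3 = Complex.exp (3 * (1 + Complex.I / (ε : ℂ)) * (H : ℂ))
        * (1 - (1 - Complex.exp (Complex.I * (θ : ℂ))) ^ 3)
      ∧ ‖u 2 3 - Complex.exp (3 * (1 + Complex.I / (ε : ℂ)) * (H : ℂ))‖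
        ≤ |θ| ^ 3 * Real.exp (3 * H) := by
  set F : ℂ := Complex.exp ((1 + Complex.I / (ε : ℂ)) * (H : ℂ)) with hF
  set q : ℂ := Complex.exp (Complex.I * (θ : ℂ)) with hq
  have hC' : ∀ z : ℂ, 𝓒 z = F * q * z := by
    intro z
    rw [h𝓒 z, Complex.ofReal_exp, ← Complex.exp_add, hF, hq, ← Complex.exp_add]
    congr 2
    ring
  -- values of u 0
  have h00 : u 0 0 = 1 := by rw [hinit 0]; rfl
  have h01 : u 0 1 = F * q := by
    rw [hinit 1, Function.iterate_one, hC', mul_one]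
  have h02 : u 0 2 = (F * q) ^ 2 := by
    rw [hinit 2, Function.iterate_succ_apply', Function.iterate_one, hC', hC']
    ring
  -- values of u 1
  have h10 : u 1 0 = 1 := hzero 1
  have h11 : u 1 1 = F := by
    rw [hrec 0 0, hC', hC', h𝓕, h00, h10]; ring
  have h12 : u 1 2 = 2 * F * (F * q) - (F * q) ^ 2 := by
    rw [hrec 0 1, hC', hC', h𝓕, h01, h11]; ring
  -- values of u 2
  have h20 : u 2 0 = 1 := hzero 2
  have h21 : u 2 1 = F := by
    rw [hrec 1 0, hC', hC', h𝓕, h10, h20]; ring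
  have h22 : u 2 2 = F ^ 2 := by
    rw [hrec 1 1, hC', hC', h𝓕, h11, h21]; ring
  have h23 : u 2 3 = 3 * F ^ 2 * (F * q) - 3 * F * (F * q) ^ 2 + (F * q) ^ 3 := by
    rw [hrec 1 2, hC', hC', h𝓕, h12, h22]; ring
  have hF3 : Complex.exp (3 * (1 + Complex.I / (ε : ℂ)) * (H : ℂ)) = F ^ 3 := by
    rw [show (3 : ℂ) * (1 + Complex.I / (ε : ℂ)) * (H : ℂ)
        = (1 + Complex.I / (ε : ℂ)) * (H : ℂ) + ((1 + Complex.I / (ε : ℂ)) * (H : ℂ)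
          + (1 + Complex.I / (ε : ℂ)) * (H : ℂ)) by ring,
      Complex.exp_add, Complex.exp_add, hF]
    ring
  have hmain : u 2 3 = Complex.exp (3 * (1 + Complex.I / (ε : ℂ)) * (H : ℂ))
      * (1 - (1 - q) ^ 3) := by
    rw [h23, hF3]; ring
  refine ⟨hmain, ?_⟩
  have hdiff : u 2 3 - Complex.exp (3 * (1 + Complex.I / (ε : ℂ)) * (H : ℂ))
      = F ^ 3 * (-(1 - q) ^ 3) := by
    rw [hmain, hF3]; ring
  rw [hdiff, norm_mul, norm_neg, norm_pow, norm_pow]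
  have habsF : ‖F‖ = Real.exp H := by
    rw [hF, Complex.norm_exp]
    congr 1
    simp [Complex.add_re, Complex.mul_re, Complex.div_re]
  have h1q : ‖1 - q‖ ≤ |θ| := by
    rw [show (1 : ℂ) - q = -(q - 1) by ring, norm_neg]
    exact abs_exp_I_sub_one_le θ
  calc ‖F‖ ^ 3 * ‖1 - q‖ ^ 3
      ≤ ‖F‖ ^ 3 * |θ| ^ 3 := by
        gcongr
    _ = |θ| ^ 3 * Real.exp (3 * H) := by
        rw [habsF, ← Real.exp_nat_mul]
        push_cast
        ring
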